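/- Let m ≥ 1 and let (L_j)_{j≥1} be Laurent polynomials over ℚ, L_j = Σ_{n∈ℤ} ℓ(n,j) q^n, whose coefficients satisfy ℓ(n,j) = ℓ(−n,j) for all n and j. Then Σ_{a ≥ 1, a ∣ m} (μ(a)/a) · σ_a(L_{m/a}) = Σ_{g≥1} c_g · f_g(q), where c_g = Σ_{n ≥ g−1} Σ_{a ≥ 1, a ∣ gcd(n,m)} (μ(a)/a) · (−1)^{n + n/a} · ℓ(n/a, m/a) · c_g^{(n)} (with gcd(0,m) interpreted as m), all sums having only finitely many nonzero terms. -/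

import Mathlib

open LaurentPolynomial

noncomputable section

/-- `f_g(q) = q^{1-g} (1+q)^{2g-2}` as a Laurent polynomial over `ℚ`. -/
def fL (g : ℕ) : LaurentPolynomial ℚ := T (1 - (g : ℤ)) * (1 + T 1) ^ (2 * g - 2)

/-- `c_g^{(m)} = (-1)^{m+g-1} (binom (m+g) (2g-1) - binom (m+g-2) (2g-1))`,
with the convention that a binomial coefficient with top argument below the bottom
one vanishes (as does the truncated subtraction case `m+g-2 < 0`). -/
def cL (g m : ℕ) : ℚ :=
  (-1) ^ (m + g - 1) * (((m + g).choose (2 * g - 1) : ℚ) - ((m + g - 2).choose (2 * g - 1) : ℚ))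

/-- `σ_a`, the `ℚ`-algebra endomorphism of `ℚ[q,q⁻¹]` determined by
`σ_a(q) = -(-q)^a` (a unit of `ℚ[q,q⁻¹]`). -/
def σL (a : ℕ) : LaurentPolynomial ℚ →ₐ[ℚ] LaurentPolynomial ℚ :=
  AddMonoidAlgebra.lift ℚ (LaurentPolynomial ℚ) ℤ
    ((Units.coeHom (LaurentPolynomial ℚ)).comp
      (zpowersHom (LaurentPolynomial ℚ)ˣ (-(-(isUnit_T (R := ℚ) 1).unit) ^ a)))

def dL (g k : ℕ) : ℚ := (if k = 0 then 2 else 1) * cL g k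

/-- second difference of binomials -/
lemma lemD (n r : ℕ) : ((n+2).choose (r+2) : ℚ) - 2 * (n+1).choose (r+2) + n.choose (r+2) = n.choose r := by
  have h1 : (n+2).choose (r+2) = (n+1).choose (r+1) + (n+1).choose (r+2) := Nat.choose_succ_succ' (n+1) (r+1)
  have h2 : (n+1).choose (r+1) = n.choose r + n.choose (r+1) := Nat.choose_succ_succ' n r
  have h3 : (n+1).choose (r+2) = n.choose (r+1) + n.choose (r+2) := Nat.choose_succ_succ' n (r+1)
  rw [h1, h2, h3]; push_cast; ring

lemma cL_one (j : ℕ) : cL 1 (j+1) = 2 * (-1)^(j+1) := by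
  simp only [cL]
  have : j + 1 + 1 - 2 = j := by omega
  rw [this]
  have : j + 1 + 1 - 1 = j + 1 := by omega
  rw [this]
  rw [Nat.choose_one_right, Nat.choose_one_right]
  push_cast; ring

lemma cL_one_zero : cL 1 0 = 1 := by simp [cL]

lemma cL_zero (k : ℕ) : cL 0 k = 0 := by simp [cL]

lemma cL_big_zero {g k : ℕ} (h : k + 2 ≤ g) : cL g k = 0 := by
  have h1 : (k+g).choose (2*g-1) = 0 := Nat.choose_eq_zero_of_lt (by omega)
  have h2 : (k+g-2).choose (2*g-1) = 0 := Nat.choose_eq_zero_of_lt (by omega)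
  simp [cL, h1, h2]

lemma cL_rec (G k : ℕ) :
    cL (G+2) (k+2) = cL (G+1) (k+1) - 2 * cL (G+2) (k+1) - cL (G+2) k := by
  simp only [cL]
  have e1 : k + 2 + (G + 2) - 1 = (k+G+1) + 2 := by omega
  have e2 : k + 2 + (G + 2) = (k+G) + 4 := by omega
  have e3 : 2 * (G + 2) - 1 = (2*G+1) + 2 := by omega
  have e4 : k + 2 + (G + 2) - 2 = (k+G) + 2 := by omega
  have e5 : k + 1 + (G + 1) - 1 = (k+G) + 1 := by omega
  have e6 : k + 1 + (G + 1) = (k+G) + 2 := by omega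
  have e7 : 2 * (G + 1) - 1 = 2*G+1 := by omega
  have e8 : k + 1 + (G + 1) - 2 = k + G := by omega
  have e9 : k + 1 + (G + 2) - 1 = (k+G) + 2 := by omega
  have e10 : k + 1 + (G + 2) = (k+G) + 3 := by omega
  have e11 : k + 1 + (G + 2) - 2 = (k+G) + 1 := by omega
  have e12 : k + (G + 2) - 1 = (k+G) + 1 := by omega
  have e13 : k + (G + 2) = (k+G) + 2 := by omega
  have e14 : k + (G + 2) - 2 = k + G := by omega
  rw [e1, e4, e3, e2, e5, e8, e7, e6, e9, e11, e10, e12, e14, e13]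
  have d1 := lemD (k+G+2) (2*G+1)
  have d2 := lemD (k+G) (2*G+1)
  have p1 : ((-1:ℚ)) ^ ((k+G+1)+2) = (-1)^(k+G+1) := by rw [pow_add]; ring
  have p2 : ((-1:ℚ)) ^ ((k+G)+2) = -(-1)^(k+G+1) := by rw [pow_add, pow_succ]; ring
  have p3 : ((-1:ℚ)) ^ ((k+G)+1) = (-1)^(k+G+1) := by ring_nf
  rw [p1, p2, p3]
  have e15 : k + G + 2 + 2 = k + G + 4 := by omega
  have e16 : k + G + 2 + 1 = k + G + 3 := by omega
  rw [e15, e16] at d1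
  linear_combination ((-1:ℚ)^(k+G+1)) * d1 - ((-1:ℚ)^(k+G+1)) * d2

lemma fL_one : fL 1 = 1 := by simp [fL]

lemma fL_two : fL 2 = T (-1) + 2 + T 1 := by
  simp only [fL]
  norm_num
  rw [sq]
  simp only [one_mul, mul_one, add_mul, ← T_add]
  norm_num
  ring_nf

lemma fL_two_mul (g : ℕ) (hg : 1 ≤ g) : fL 2 * fL g = fL (g+1) := by
  simp only [fL]
  have h1 : 2*(g+1) - 2 = (2*2-2) + (2*g-2) := by omega
  rw [h1, pow_add]
  rw [show (1 - ((g:ℕ)+1 : ℕ) : ℤ) = (1-(2:ℕ)) + (1 - (g:ℤ)) by push_cast; ring, T_add]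
  ring

lemma Erec (k : ℕ) :
    (T ((k:ℤ)+2) + T (-((k:ℤ)+2)) : LaurentPolynomial ℚ)
      = (T (-1) + T 1) * (T ((k:ℤ)+1) + T (-((k:ℤ)+1))) - (T (k:ℤ) + T (-(k:ℤ))) := by
  simp only [mul_add, add_mul, ← T_add]
  ring_nf

lemma dL_one (k : ℕ) : dL 1 k = 2 * (-1)^k := by
  cases k with
  | zero => simp [dL, cL_one_zero]
  | succ j => simp [dL, cL_one j]

lemma dL_zero (k : ℕ) : dL 0 k = 0 := by simp [dL, cL_zero]

lemma dL_big_zero {g k : ℕ} (h : k + 2 ≤ g) : dL g k = 0 := by simp [dL, cL_big_zero h]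

lemma dL_rec (g k : ℕ) :
    dL (g+1) (k+2) = dL g (k+1) - 2 * dL (g+1) (k+1) - dL (g+1) k := by
  cases g with
  | zero =>
    rw [dL_one, dL_one, dL_one, dL_zero]
    ring
  | succ G =>
    cases k with
    | zero =>
      have h0 : cL (G+2) 0 = 0 := cL_big_zero (by omega)
      simp only [dL, if_pos rfl, if_neg (by omega : (2:ℕ) ≠ 0), if_neg (by omega : (1:ℕ) ≠ 0),
        one_mul, h0, mul_zero]
      rw [cL_rec G 0, h0]
    | succ j =>
      simp only [dL, if_neg (by omega : j+1+2 ≠ 0), if_neg (by omega : j+1+1 ≠ 0),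
        if_neg (by omega : j+1 ≠ 0), one_mul]
      exact cL_rec G (j+1)

lemma smul_eq_C_mul (c : ℚ) (f : LaurentPolynomial ℚ) : c • f = C c * f := by
  rw [Algebra.smul_def]; rfl

lemma lemA : ∀ k : ℕ, (T (k:ℤ) + T (-(k:ℤ)) : LaurentPolynomial ℚ)
    = ∑ g ∈ Finset.range (k+1), C (dL (g+1) k) * fL (g+1) := by
  intro k
  induction k using Nat.twoStepInduction with
  | zero =>
    have h : dL 1 0 = 2 := by rw [dL_one]; norm_num
    rw [show (0:ℕ)+1 = 1 from rfl, Finset.range_one, Finset.sum_singleton, fL_one, h]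
    rw [show ((0:ℕ):ℤ) = 0 from rfl]
    simp [map_ofNat]
    norm_num
  | one =>
    rw [show Finset.range 2 = {0, 1} from rfl, Finset.sum_insert (by decide), Finset.sum_singleton]
    rw [fL_one, fL_two]
    have h1 : dL 1 1 = -2 := by simp [dL, cL_one 0]
    have h2 : dL 2 1 = 1 := by simp [dL, cL]; rfl
    rw [h1, h2, map_one, map_neg, map_ofNat]
    push_cast
    ring
  | more k ih0 ih1 =>
    have hcast : ((k+2 : ℕ) : ℤ) = (k:ℤ)+2 := by push_cast; ring
    have hcast1 : ((k+1 : ℕ) : ℤ) = (k:ℤ)+1 := by push_cast; ring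
    rw [hcast, Erec k]
    rw [show (T (-1) + T 1 : LaurentPolynomial ℚ) = fL 2 - 2 by rw [fL_two]; ring]
    rw [← hcast1] at *
    rw [ih0, ih1]
    -- extend sums to range (k+3)
    have hA : ∑ g ∈ Finset.range (k+2), C (dL (g+1) (k+1)) * fL (g+1)
        = ∑ g ∈ Finset.range (k+3), C (dL (g+1) (k+1)) * fL (g+1) := by
      refine Finset.sum_subset (Finset.range_subset_range.2 (by omega)) ?_
      intro g hg hng
      have : g = k+2 := by simp at hg hng; omega
      rw [this, dL_big_zero (by omega), map_zero, zero_mul]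
    have hB : ∑ g ∈ Finset.range (k+1), C (dL (g+1) k) * fL (g+1)
        = ∑ g ∈ Finset.range (k+3), C (dL (g+1) k) * fL (g+1) := by
      refine Finset.sum_subset (Finset.range_subset_range.2 (by omega)) ?_
      intro g hg hng
      have : k + 2 ≤ g + 1 := by simp at hg hng; omega
      rw [dL_big_zero this, map_zero, zero_mul]
    rw [hA, hB]
    have hmul : fL 2 * ∑ g ∈ Finset.range (k+3), C (dL (g+1) (k+1)) * fL (g+1)
        = ∑ g ∈ Finset.range (k+3), C (dL g (k+1)) * fL (g+1) := by
      rw [Finset.mul_sum]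
      have step : ∀ g ∈ Finset.range (k+3), fL 2 * (C (dL (g+1) (k+1)) * fL (g+1))
          = C (dL (g+1) (k+1)) * fL (g+2) := by
        intro g _
        rw [← fL_two_mul (g+1) (by omega)]
        ring
      rw [Finset.sum_congr rfl step]
      -- shift index
      have h1 : ∑ g ∈ Finset.range (k+4), C (dL g (k+1)) * fL (g+1)
          = ∑ g ∈ Finset.range (k+3), C (dL (g+1) (k+1)) * fL (g+1+1) + C (dL 0 (k+1)) * fL (0+1) :=
        Finset.sum_range_succ' _ (k+3)
      have h2 : ∑ g ∈ Finset.range (k+4), C (dL g (k+1)) * fL (g+1)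
          = ∑ g ∈ Finset.range (k+3), C (dL g (k+1)) * fL (g+1) + C (dL (k+3) (k+1)) * fL (k+3+1) :=
        Finset.sum_range_succ _ (k+3)
      rw [dL_zero, map_zero, zero_mul, add_zero] at h1
      rw [dL_big_zero (by omega : k+1+2 ≤ k+3), map_zero, zero_mul, add_zero] at h2
      rw [← h1, h2]
    rw [sub_mul, hmul, Finset.mul_sum]
    rw [← Finset.sum_sub_distrib, ← Finset.sum_sub_distrib]
    refine Finset.sum_congr rfl ?_
    intro g _
    rw [dL_rec g (k)]
    push_cast [map_sub, map_mul, map_ofNat]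
    ring

/-- sign function -/
def sg (z : ℤ) : ℚ := if Even z then 1 else -1

lemma sg_add (x y : ℤ) : sg (x + y) = sg x * sg y := by
  by_cases hx : Even x <;> by_cases hy : Even y <;>
    simp [sg, hx, hy, Int.even_add]

lemma sg_zero : sg 0 = 1 := by simp [sg]

lemma sg_neg (x : ℤ) : sg (-x) = sg x := by simp [sg]

lemma sg_natCast (n : ℕ) : sg (n : ℤ) = (-1) ^ n := by
  rcases Nat.even_or_odd n with h | h
  · simp [sg, h, Int.even_coe_nat, h.neg_one_pow]
  · simp [sg, Int.even_coe_nat, Nat.not_even_iff_odd.2 h, h.neg_one_pow]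

lemma w_val (a : ℕ) :
    ((-(-(isUnit_T (R := ℚ) 1).unit) ^ a : (LaurentPolynomial ℚ)ˣ) : LaurentPolynomial ℚ)
      = C ((-1) ^ (a+1) : ℚ) * T a := by
  rw [Units.val_neg, Units.val_pow_eq_pow_val, Units.val_neg, IsUnit.unit_spec]
  rw [neg_pow, T_pow, map_pow, map_neg, map_one, pow_succ]
  push_cast
  ring

lemma w_inv_val (a : ℕ) :
    (((-(-(isUnit_T (R := ℚ) 1).unit) ^ a : (LaurentPolynomial ℚ)ˣ)⁻¹ : (LaurentPolynomial ℚ)ˣ) : LaurentPolynomial ℚ)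
      = C ((-1) ^ (a+1) : ℚ) * T (-a) := by
  refine Units.inv_eq_of_mul_eq_one_right ?_
  rw [w_val]
  rw [show (C ((-1) ^ (a+1) : ℚ) * T (a:ℤ)) * (C ((-1) ^ (a+1) : ℚ) * T (-(a:ℤ)))
      = (C ((-1) ^ (a+1) : ℚ) * C ((-1) ^ (a+1) : ℚ)) * (T (a:ℤ) * T (-(a:ℤ))) by ring]
  rw [← T_add, add_neg_cancel, T_zero, ← map_mul, ← pow_add, ← two_mul]
  rw [pow_mul]
  norm_num

lemma w_zpow_val (a : ℕ) (k : ℤ) :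
    (((-(-(isUnit_T (R := ℚ) 1).unit) ^ a : (LaurentPolynomial ℚ)ˣ) ^ k : (LaurentPolynomial ℚ)ˣ) : LaurentPolynomial ℚ)
      = C (sg (((a:ℤ)+1) * k)) * T ((a:ℤ) * k) := by
  induction k using Int.induction_on with
  | zero => simp [sg_zero]
  | succ i ih =>
    rw [zpow_add_one, Units.val_mul, ih, w_val]
    rw [show ((a:ℤ)+1) * ((i:ℤ)+1) = ((a:ℤ)+1)*(i:ℤ) + ((a+1 : ℕ) : ℤ) by push_cast; ring]
    rw [sg_add, sg_natCast, map_mul]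
    rw [show (a:ℤ) * ((i:ℤ)+1) = (a:ℤ)*(i:ℤ) + (a:ℤ) by ring, T_add]
    ring
  | pred i ih =>
    rw [zpow_sub_one, Units.val_mul, ih, w_inv_val]
    rw [show ((a:ℤ)+1) * (-(i:ℤ)-1) = ((a:ℤ)+1)*(-(i:ℤ)) + (-((a+1 : ℕ) : ℤ)) by push_cast; ring]
    rw [sg_add, sg_neg, sg_natCast, map_mul]
    rw [show (a:ℤ) * (-(i:ℤ)-1) = (a:ℤ)*(-(i:ℤ)) + (-(a:ℤ)) by ring, T_add]
    ring

lemma σL_T (a : ℕ) (k : ℤ) : σL a (T k) = C (sg (((a:ℤ)+1) * k)) * T ((a:ℤ) * k) := by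
  have h : (T k : LaurentPolynomial ℚ) = AddMonoidAlgebra.single k 1 := rfl
  rw [σL, h, AddMonoidAlgebra.lift_single, one_smul]
  exact w_zpow_val a k

lemma σL_single (a : ℕ) (n : ℤ) (r : ℚ) :
    σL a (AddMonoidAlgebra.single n r) = AddMonoidAlgebra.single ((a:ℤ)*n) (sg (((a:ℤ)+1)*n) * r) := by
  rw [single_eq_C_mul_T, single_eq_C_mul_T]
  have hC : σL a (C r) = C r := by
    have : (C r : LaurentPolynomial ℚ) = algebraMap ℚ _ r := rfl
    rw [this, AlgHom.commutes]
  rw [map_mul, hC, σL_T, map_mul]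
  ring

lemma σL_apply_mul (a : ℕ) (ha : 1 ≤ a) (Q : LaurentPolynomial ℚ) (k : ℤ) :
    (σL a Q).coeff ((a:ℤ)*k) = sg (((a:ℤ)+1)*k) * Q.coeff k := by
  induction Q using AddMonoidAlgebra.induction_linear with
  | zero => simp
  | add f g hf hg =>
    rw [map_add, AddMonoidAlgebra.coeff_add, Finsupp.add_apply, hf, hg, AddMonoidAlgebra.coeff_add, Finsupp.add_apply]
    ring
  | single n r =>
    rw [σL_single, AddMonoidAlgebra.coeff_single, AddMonoidAlgebra.coeff_single, Finsupp.single_apply, Finsupp.single_apply]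
    have hne : (a:ℤ) ≠ 0 := by positivity
    by_cases h : n = k
    · subst h; simp
    · rw [if_neg h, if_neg (fun hc => h (by exact mul_left_cancel₀ hne hc)), mul_zero]

lemma σL_apply_not_dvd (a : ℕ) (Q : LaurentPolynomial ℚ) (z : ℤ) (h : ¬ ((a:ℤ) ∣ z)) :
    (σL a Q).coeff z = 0 := by
  induction Q using AddMonoidAlgebra.induction_linear with
  | zero => simp
  | add f g hf hg => rw [map_add, AddMonoidAlgebra.coeff_add, Finsupp.add_apply, hf, hg, add_zero]
  | single n r =>
    rw [σL_single, AddMonoidAlgebra.coeff_single, Finsupp.single_apply, if_neg (fun hc => h ⟨n, hc.symm⟩)]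

lemma decomp (P : LaurentPolynomial ℚ) (hs : ∀ z : ℤ, P.coeff z = P.coeff (-z)) (N : ℕ)
    (hN : ∀ n : ℕ, N < n → P.coeff (n:ℤ) = 0) :
    P = ∑ k ∈ Finset.range (N+1), P.coeff (k:ℤ) •
      (if k = 0 then (1 : LaurentPolynomial ℚ) else T (k:ℤ) + T (-(k:ℤ))) := by
  ext z
  rw [AddMonoidAlgebra.coeff_sum, Finset.sum_apply']
  have hone : ∀ w : ℤ, (1 : LaurentPolynomial ℚ).coeff w = if 0 = w then 1 else 0 := by
    intro w; rw [← T_zero (R := ℚ), T_apply]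
  rcases le_or_gt 0 z with hz | hz
  · obtain ⟨n, rfl⟩ : ∃ n : ℕ, z = (n:ℤ) := ⟨z.toNat, (Int.toNat_of_nonneg hz).symm⟩
    rw [Finset.sum_eq_single n]
    · by_cases hn : n = 0
      · subst hn
        rw [if_pos rfl, Nat.cast_zero, AddMonoidAlgebra.coeff_smul_apply, hone, if_pos rfl, smul_eq_mul, mul_one]
      · rw [if_neg hn, AddMonoidAlgebra.coeff_smul_apply, AddMonoidAlgebra.coeff_add, Finsupp.add_apply, T_apply, T_apply,
          if_pos rfl, if_neg (by omega : -(n:ℤ) ≠ (n:ℤ))]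
        simp
    · intro k hk hkn
      by_cases h0 : k = 0
      · subst h0
        rw [if_pos rfl, AddMonoidAlgebra.coeff_smul_apply, hone, if_neg (by omega : (0:ℤ) ≠ (n:ℤ))]
        simp
      · rw [if_neg h0, AddMonoidAlgebra.coeff_smul_apply, AddMonoidAlgebra.coeff_add, Finsupp.add_apply, T_apply, T_apply,
          if_neg (by exact_mod_cast hkn), if_neg (by omega : -(k:ℤ) ≠ (n:ℤ))]
        simp
    · intro hn
      have : N < n := by simp at hn; omega
      rw [hN n this]
      simp
  · obtain ⟨n, hn1, rfl⟩ : ∃ n : ℕ, 1 ≤ n ∧ z = -(n:ℤ) := by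
      refine ⟨(-z).toNat, by omega, by omega⟩
    rw [Finset.sum_eq_single n]
    · have hn0 : n ≠ 0 := by omega
      rw [if_neg hn0, AddMonoidAlgebra.coeff_smul_apply, AddMonoidAlgebra.coeff_add, Finsupp.add_apply, T_apply, T_apply,
        if_neg (by omega : (n:ℤ) ≠ -(n:ℤ)), if_pos rfl]
      rw [hs (-(n:ℤ))]
      simp
    · intro k hk hkn
      by_cases h0 : k = 0
      · subst h0
        rw [if_pos rfl, AddMonoidAlgebra.coeff_smul_apply, hone, if_neg (by omega : (0:ℤ) ≠ -(n:ℤ))]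
        simp
      · rw [if_neg h0, AddMonoidAlgebra.coeff_smul_apply, AddMonoidAlgebra.coeff_add, Finsupp.add_apply, T_apply, T_apply,
          if_neg (by omega : (k:ℤ) ≠ -(n:ℤ)),
          if_neg (by intro h; apply hkn; omega)]
        simp
    · intro hn
      have : N < n := by simp at hn; omega
      rw [hN n this]
      simp

lemma lemEk (k : ℕ) : (if k = 0 then (1 : LaurentPolynomial ℚ) else T (k:ℤ) + T (-(k:ℤ)))
    = ∑ g ∈ Finset.range (k+1), C (cL (g+1) k) * fL (g+1) := by
  cases k with
  | zero =>
    rw [if_pos rfl, Finset.range_one, Finset.sum_singleton]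
    have h1 : cL 1 0 = 1 := by simp [cL]
    rw [h1, map_one, one_mul]
    simp [fL]
  | succ j =>
    rw [if_neg (by omega), lemA (j+1)]
    refine Finset.sum_congr rfl fun g _ => ?_
    simp [dL]

/-- Let `m ≥ 1` and let `(L_j)_{j ≥ 1}` be Laurent polynomials over `ℚ` with
symmetric coefficients `ℓ(n,j) = ℓ(-n,j)` (here `ℓ(n,j) = L j n`).  Then
`∑_{a ∣ m} (μ(a)/a) σ_a(L_{m/a}) = ∑_{g ≥ 1} c_g f_g(q)` where
`c_g = ∑_{n ≥ g-1} ∑_{a ∣ gcd(n,m)} (μ(a)/a) (-1)^{n+n/a} ℓ(n/a, m/a) c_g^{(n)}`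
(with `gcd(0,m) = m`); all the infinite sums are finitely supported and are taken
as `finsum`s. -/
theorem stmt11 (m : ℕ) (hm : 1 ≤ m) (L : ℕ → LaurentPolynomial ℚ)
    (hsym : ∀ j : ℕ, 1 ≤ j → ∀ n : ℤ, (L j).coeff n = (L j).coeff (-n)) :
    ∑ a ∈ m.divisors,
        (((ArithmeticFunction.moebius a : ℤ) : ℚ) / (a : ℚ)) • σL a (L (m / a)) =
      ∑ᶠ g ∈ Set.Ici (1 : ℕ),
        (∑ᶠ n ∈ Set.Ici (g - 1),
            ∑ a ∈ (Nat.gcd n m).divisors,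
              ((ArithmeticFunction.moebius a : ℤ) : ℚ) / (a : ℚ) *
                (-1) ^ (n + n / a) * (L (m / a)).coeff ((n / a : ℕ) : ℤ) * cL g n) • fL g := by
  set μq : ℕ → ℚ := fun a => ((ArithmeticFunction.moebius a : ℤ) : ℚ) / (a : ℚ) with hμq
  set P : LaurentPolynomial ℚ := ∑ a ∈ m.divisors, μq a • σL a (L (m / a)) with hP
  -- coefficients of P
  have hPapp : ∀ z : ℤ, P.coeff z = ∑ a ∈ m.divisors, μq a * ((σL a (L (m/a))).coeff z) := by
    intro z
    rw [hP, AddMonoidAlgebra.coeff_sum, Finset.sum_apply']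
    exact Finset.sum_congr rfl fun a _ => by rw [AddMonoidAlgebra.coeff_smul_apply, smul_eq_mul]
  have hdiv : ∀ a ∈ m.divisors, 1 ≤ a ∧ a ∣ m ∧ 1 ≤ m / a := by
    intro a ha
    obtain ⟨had, hm0⟩ := Nat.mem_divisors.mp ha
    have ha1 : 1 ≤ a := Nat.pos_of_mem_divisors ha
    exact ⟨ha1, had, Nat.one_le_div_iff ha1 |>.2 (Nat.le_of_dvd hm had)⟩
  -- symmetry of P
  have hPsym : ∀ z : ℤ, P.coeff z = P.coeff (-z) := by
    intro z
    rw [hPapp, hPapp]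
    refine Finset.sum_congr rfl fun a ha => ?_
    obtain ⟨ha1, had, hma⟩ := hdiv a ha
    by_cases hz : (a:ℤ) ∣ z
    · obtain ⟨k, rfl⟩ := hz
      rw [← mul_neg, σL_apply_mul a ha1, σL_apply_mul a ha1, mul_neg, sg_neg,
        ← hsym (m/a) hma]
    · rw [σL_apply_not_dvd a _ _ hz, σL_apply_not_dvd a _ _ (by
        intro ⟨k, hk⟩; exact hz ⟨-k, by rw [mul_neg, ← hk, neg_neg]⟩)]
  have hPcoeff : ∀ n : ℕ, P.coeff (n:ℤ) =
      ∑ a ∈ (Nat.gcd n m).divisors, μq a * (-1)^(n + n/a) * (L (m/a)).coeff ((n/a : ℕ) : ℤ) := by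
    intro n
    rw [hPapp]
    have hsplit : ∀ a ∈ m.divisors, μq a * ((σL a (L (m/a))).coeff (n:ℤ))
        = if a ∣ n then μq a * (-1)^(n + n/a) * (L (m/a)).coeff ((n/a : ℕ) : ℤ) else 0 := by
      intro a ha
      obtain ⟨ha1, had, hma⟩ := hdiv a ha
      by_cases hdn : a ∣ n
      · rw [if_pos hdn]
        have hcast : (n:ℤ) = (a:ℤ) * ((n/a : ℕ) : ℤ) := by
          push_cast [Nat.div_mul_cancel hdn]
          rw [mul_comm]
          exact_mod_cast (Nat.div_mul_cancel hdn).symm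
        rw [hcast, σL_apply_mul a ha1]
        have hsg : sg (((a:ℤ)+1) * ((n/a : ℕ) : ℤ)) = (-1)^(n + n/a) := by
          have : ((a:ℤ)+1) * ((n/a : ℕ) : ℤ) = (((a+1) * (n/a) : ℕ) : ℤ) := by push_cast; ring
          rw [this, sg_natCast]
          congr 1
          rw [add_mul, one_mul, Nat.mul_div_cancel' hdn]
        rw [hsg]
        ring
      · rw [if_neg hdn, σL_apply_not_dvd a _ (n:ℤ) (by exact_mod_cast hdn), mul_zero]
    rw [Finset.sum_congr rfl hsplit, Finset.sum_ite, Finset.sum_const_zero, add_zero]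
    refine (Finset.sum_congr ?_ fun _ _ => rfl)
    ext a
    simp only [Finset.mem_filter, Nat.mem_divisors, Nat.dvd_gcd_iff]
    constructor
    · rintro ⟨⟨ham, hm0⟩, han⟩; exact ⟨⟨han, ham⟩, Nat.gcd_ne_zero_right (by omega)⟩
    · rintro ⟨⟨han, ham⟩, _⟩; exact ⟨⟨ham, by omega⟩, han⟩
  -- support bound
  set N : ℕ := P.coeff.support.sup Int.natAbs with hNdef
  have hN : ∀ n : ℕ, N < n → P.coeff (n:ℤ) = 0 := by
    intro n hn
    by_contra h
    have : (n:ℤ) ∈ P.coeff.support := Finsupp.mem_support_iff.2 h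
    have := Finset.le_sup (f := Int.natAbs) this
    simp at this
    omega
  -- decomposition of P
  have hdec := decomp P hPsym N hN
  simp only [lemEk] at hdec
  have hdec2 : P = ∑ g ∈ Finset.range (N+1),
      C (∑ k ∈ Finset.range (N+1), P.coeff (k:ℤ) * cL (g+1) k) * fL (g+1) := by
    refine hdec.trans ?_
    have h1 : ∀ k ∈ Finset.range (N+1),
        (P.coeff (k:ℤ) • ∑ g ∈ Finset.range (k+1), C (cL (g+1) k) * fL (g+1))
        = ∑ g ∈ Finset.range (N+1), C (P.coeff (k:ℤ) * cL (g+1) k) * fL (g+1) := by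
      intro k hk
      have hext : ∑ g ∈ Finset.range (k+1), C (cL (g+1) k) * fL (g+1)
          = ∑ g ∈ Finset.range (N+1), C (cL (g+1) k) * fL (g+1) := by
        refine Finset.sum_subset (Finset.range_subset_range.2 (by simp at hk; omega)) ?_
        intro g hg hng
        have : k + 2 ≤ g + 1 := by simp at hg hng; omega
        rw [cL_big_zero this, map_zero, zero_mul]
      rw [hext, Finset.smul_sum]
      refine Finset.sum_congr rfl fun g _ => ?_
      rw [_root_.smul_eq_C_mul, map_mul]
      ring
    rw [Finset.sum_congr rfl h1, Finset.sum_comm]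
    refine Finset.sum_congr rfl fun g _ => ?_
    rw [← Finset.sum_mul, ← map_sum]
  -- the right-hand side
  have hinner : ∀ g ∈ Set.Ici 1, (∑ᶠ n ∈ Set.Ici (g-1),
      ∑ a ∈ (Nat.gcd n m).divisors, μq a * (-1)^(n + n/a) * (L (m/a)).coeff ((n/a : ℕ) : ℤ) * cL g n)
      = ∑ n ∈ Finset.range (N+1), P.coeff (n:ℤ) * cL g n := by
    intro g hg
    have hg1 : 1 ≤ g := hg
    have hterm : ∀ n ∈ Set.Ici (g-1), (∑ a ∈ (Nat.gcd n m).divisors,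
        μq a * (-1)^(n + n/a) * (L (m/a)).coeff ((n/a : ℕ) : ℤ) * cL g n) = P.coeff (n:ℤ) * cL g n := by
      intro n _
      rw [← Finset.sum_mul, ← hPcoeff]
    rw [finsum_mem_congr rfl hterm]
    rw [finsum_mem_eq_sum_of_subset _ (t := Finset.Icc (g-1) N) ?_ ?_]
    · refine Finset.sum_subset (fun x hx => ?_) (fun x hx hnx => ?_)
      · simp at hx ⊢; omega
      · simp only [Finset.mem_range, Finset.mem_Icc, not_and, not_le] at hx hnx
        rcases le_or_gt (g-1) x with h | h
        · rw [hN x (hnx h)]; ring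
        · rw [cL_big_zero (by omega), mul_zero]
    · intro x hx
      simp only [Set.mem_inter_iff, Set.mem_Ici, Function.mem_support] at hx
      simp only [Finset.coe_Icc, Set.mem_Icc]
      refine ⟨hx.1, ?_⟩
      by_contra hc
      exact hx.2 (by rw [hN x (by omega)]; ring)
    · intro x hx
      simp only [Finset.coe_Icc, Set.mem_Icc] at hx
      exact hx.1
  simp only [hμq] at hinner
  have houter : (∑ᶠ g ∈ Set.Ici (1:ℕ),
      (∑ᶠ n ∈ Set.Ici (g-1), ∑ a ∈ (Nat.gcd n m).divisors,
        ((ArithmeticFunction.moebius a : ℤ) : ℚ) / (a : ℚ) *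
          (-1) ^ (n + n / a) * (L (m / a)).coeff ((n / a : ℕ) : ℤ) * cL g n) • fL g)
      = ∑ᶠ g ∈ Set.Ici (1:ℕ), (∑ n ∈ Finset.range (N+1), P.coeff (n:ℤ) * cL g n) • fL g :=
    finsum_mem_congr rfl fun g hg => by rw [hinner g hg]
  rw [houter]
  rw [finsum_mem_eq_sum_of_subset _ (t := Finset.Icc 1 (N+1)) ?_ ?_]
  · conv_lhs => rw [hdec2]
    rw [show Finset.Icc 1 (N+1) = Finset.Ico 1 (N+2) by rw [← Finset.Ico_add_one_right_eq_Icc]; rfl,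
      Finset.sum_Ico_eq_sum_range, show N + 2 - 1 = N + 1 from rfl]
    refine Finset.sum_congr rfl fun g _ => ?_
    rw [_root_.smul_eq_C_mul, show 1 + g = g + 1 by omega]
  · intro x hx
    simp only [Set.mem_inter_iff, Set.mem_Ici, Function.mem_support] at hx
    simp only [Finset.coe_Icc, Set.mem_Icc]
    refine ⟨hx.1, ?_⟩
    by_contra hc
    refine hx.2 ?_
    have hz : ∑ n ∈ Finset.range (N+1), P.coeff (n:ℤ) * cL x n = 0 := by
      refine Finset.sum_eq_zero fun n hn => ?_
      rw [cL_big_zero (by simp at hn; omega), mul_zero]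
    rw [hz, zero_smul]
  · intro x hx
    simp only [Finset.coe_Icc, Set.mem_Icc] at hx
    exact hx.1


end
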